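/- In ℤ⁴ with standard inner product, let h = e₁ + e₂ and consider vectors l of the form ±e₁ ± e₃ or ±e₂ ± e₄ with l·h = 1. If C = {e₁ + e₃, e₁ − e₃, e₂ + e₄, e₂ − e₄} (a 4-element set of such vectors), then (1/2)(l₁ + l₂ − l₃ − l₄) = e₁ − e₂ is an integer vector of square 2 lying in the span of the differences of elements of C; hence any subset C of {l : l² = 2, l·h = 1, l ∈ ℤ⁴ appropriate} whose difference span avoids square-2 integer vectors has at most 3 elements. -/

import Mathlib

set_option maxRecDepth 100000 in
private def V : Fin 8 → Fin 4 → ℤ :=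
![![1,0,1,0], ![1,0,-1,0], ![1,0,0,1], ![1,0,0,-1],
  ![0,1,1,0], ![0,1,-1,0], ![0,1,0,1], ![0,1,0,-1]]

private lemma classifyZ (a b c d : ℤ) (h2 : a*a + b*b + c*c + d*d = 2) (h1 : a + b = 1) :
    ∃ i : Fin 8, a = V i 0 ∧ b = V i 1 ∧ c = V i 2 ∧ d = V i 3 := by
  have ha1 : 2*a - 1 ≤ 2 := by nlinarith [sq_nonneg (a-1), sq_nonneg b, sq_nonneg c, sq_nonneg d]
  have ha2 : -(2*a) - 1 ≤ 2 := by nlinarith [sq_nonneg (a+1), sq_nonneg b, sq_nonneg c, sq_nonneg d]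
  have hb1 : 2*b - 1 ≤ 2 := by nlinarith [sq_nonneg (b-1), sq_nonneg a, sq_nonneg c, sq_nonneg d]
  have hb2 : -(2*b) - 1 ≤ 2 := by nlinarith [sq_nonneg (b+1), sq_nonneg a, sq_nonneg c, sq_nonneg d]
  have hc1 : 2*c - 1 ≤ 2 := by nlinarith [sq_nonneg (c-1), sq_nonneg b, sq_nonneg a, sq_nonneg d]
  have hc2 : -(2*c) - 1 ≤ 2 := by nlinarith [sq_nonneg (c+1), sq_nonneg b, sq_nonneg a, sq_nonneg d]
  have hd1 : 2*d - 1 ≤ 2 := by nlinarith [sq_nonneg (d-1), sq_nonneg b, sq_nonneg c, sq_nonneg a]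
  have hd2 : -(2*d) - 1 ≤ 2 := by nlinarith [sq_nonneg (d+1), sq_nonneg b, sq_nonneg c, sq_nonneg a]
  have Ha1 : -1 ≤ a := by omega
  have Ha2 : a ≤ 1 := by omega
  have Hb1 : -1 ≤ b := by omega
  have Hb2 : b ≤ 1 := by omega
  have Hc1 : -1 ≤ c := by omega
  have Hc2 : c ≤ 1 := by omega
  have Hd1 : -1 ≤ d := by omega
  have Hd2 : d ≤ 1 := by omega
  interval_cases a <;> interval_cases b <;> interval_cases c <;> interval_cases d <;>
    revert h1 h2 <;> decide

set_option maxRecDepth 100000 in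
private lemma key : ∀ E : Finset (Fin 8), E.card = 4 →
    ∃ p ∈ E, ∃ q ∈ E, ∃ r ∈ E, ∃ s ∈ E,
      (∀ i, 2 ∣ (V p i + V r i - V q i - V s i)) ∧
      (∑ i, (V p i + V r i - V q i - V s i)^2) = 8 := by decide

theorem stmt19 :
    (((1 : ℚ) / 2) • ((![1,0,1,0] : Fin 4 → ℚ) + ![1,0,-1,0] - ![0,1,0,1] - ![0,1,0,-1])
        = ![1,-1,0,0] ∧
      (∑ i, (![1,-1,0,0] : Fin 4 → ℚ) i * (![1,-1,0,0] : Fin 4 → ℚ) i) = 2 ∧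
      (![1,-1,0,0] : Fin 4 → ℚ) ∈ Submodule.span ℚ
        {z : Fin 4 → ℚ | ∃ x ∈ ({![1,0,1,0], ![1,0,-1,0], ![0,1,0,1], ![0,1,0,-1]} :
            Set (Fin 4 → ℚ)),
          ∃ y ∈ ({![1,0,1,0], ![1,0,-1,0], ![0,1,0,1], ![0,1,0,-1]} : Set (Fin 4 → ℚ)),
          z = x - y}) ∧
    (∀ C : Finset (Fin 4 → ℚ),
      (∀ l ∈ C, (∀ i, ∃ k : ℤ, l i = k) ∧ (∑ i, l i * l i) = 2 ∧
        (∑ i, l i * (![1,1,0,0] : Fin 4 → ℚ) i) = 1) →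
      (∀ z ∈ Submodule.span ℚ {z : Fin 4 → ℚ | ∃ x ∈ C, ∃ y ∈ C, z = x - y},
        (∀ i, ∃ k : ℤ, z i = k) → (∑ i, z i * z i) ≠ 2) →
      C.card ≤ 3) := by
  refine ⟨⟨?_, ?_, ?_⟩, ?_⟩
  · funext i; fin_cases i <;> norm_num
  · simp [Fin.sum_univ_four]; norm_num
  · have h1 : ((![1,0,1,0] : Fin 4 → ℚ) - ![0,1,0,1]) ∈
        {z : Fin 4 → ℚ | ∃ x ∈ ({![1,0,1,0], ![1,0,-1,0], ![0,1,0,1], ![0,1,0,-1]} :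
            Set (Fin 4 → ℚ)),
          ∃ y ∈ ({![1,0,1,0], ![1,0,-1,0], ![0,1,0,1], ![0,1,0,-1]} : Set (Fin 4 → ℚ)),
          z = x - y} := ⟨_, by simp, _, by simp, rfl⟩
    have h2 : ((![1,0,-1,0] : Fin 4 → ℚ) - ![0,1,0,-1]) ∈
        {z : Fin 4 → ℚ | ∃ x ∈ ({![1,0,1,0], ![1,0,-1,0], ![0,1,0,1], ![0,1,0,-1]} :
            Set (Fin 4 → ℚ)),
          ∃ y ∈ ({![1,0,1,0], ![1,0,-1,0], ![0,1,0,1], ![0,1,0,-1]} : Set (Fin 4 → ℚ)),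
          z = x - y} := ⟨_, by simp, _, by simp, rfl⟩
    have hm := Submodule.smul_mem _ ((1:ℚ)/2)
      (add_mem (Submodule.subset_span h1) (Submodule.subset_span h2))
    convert hm using 1
    funext i; fin_cases i <;> norm_num
  · intro C hC hspan
    by_contra hcard
    push_neg at hcard
    classical
    have hidx : ∀ l ∈ C, ∃ i : Fin 8, l = fun j => ((V i j : ℤ) : ℚ) := by
      intro l hl
      obtain ⟨hint, hsq, hdot⟩ := hC l hl
      choose k hk using hint
      have hdot' : k 0 + k 1 = 1 := by
        have h := hdot
        simp only [Fin.sum_univ_four, hk] at h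
        norm_num at h
        have e2 : (![1,1,0,0] : Fin 4 → ℚ) 2 = 0 := rfl
        have e3 : (![1,1,0,0] : Fin 4 → ℚ) 3 = 0 := rfl
        simp only [e2, e3, mul_zero, add_zero] at h
        exact_mod_cast h
      have hsq' : k 0 * k 0 + k 1 * k 1 + k 2 * k 2 + k 3 * k 3 = 2 := by
        have h := hsq
        simp only [Fin.sum_univ_four, hk] at h
        exact_mod_cast h
      obtain ⟨i, e0, e1, e2, e3⟩ := classifyZ _ _ _ _ hsq' hdot'
      have hkv : ∀ j, k j = V i j := by
        intro j
        fin_cases j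
        · exact e0
        · exact e1
        · exact e2
        · exact e3
      exact ⟨i, funext fun j => by rw [hk j, hkv j]⟩
    let g : (Fin 4 → ℚ) → Fin 8 := fun l =>
      if h : ∃ i : Fin 8, l = fun j => ((V i j : ℤ) : ℚ) then h.choose else 0
    have hg : ∀ l ∈ C, l = fun j => ((V (g l) j : ℤ) : ℚ) := by
      intro l hl
      have h := hidx l hl
      simp only [g, dif_pos h]
      exact h.choose_spec
    have hginj : Set.InjOn g C := fun x hx y hy hxy => by
      rw [hg x hx, hg y hy, hxy]
    have hEc : (C.image g).card = C.card := Finset.card_image_of_injOn hginj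
    obtain ⟨E, hEsub, hEcard⟩ := Finset.exists_subset_card_eq (s := C.image g) (n := 4) (by omega)
    obtain ⟨p, hp, q, hq, r, hr, s, hs, hdvd, hsum8⟩ := key E hEcard
    have hmem : ∀ t ∈ E, (fun j => ((V t j : ℤ) : ℚ)) ∈ C := by
      intro t ht
      obtain ⟨x, hx, hgx⟩ := Finset.mem_image.mp (hEsub ht)
      have h := hg x hx
      rw [hgx] at h
      rwa [← h]
    set z : Fin 4 → ℚ := fun j => ((V p j + V r j - V q j - V s j : ℤ) : ℚ) / 2 with hz
    have hzspan : z ∈ Submodule.span ℚ {z : Fin 4 → ℚ | ∃ x ∈ C, ∃ y ∈ C, z = x - y} := by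
      have ha : ((fun j => ((V p j : ℤ) : ℚ)) - fun j => ((V q j : ℤ) : ℚ)) ∈
          {z : Fin 4 → ℚ | ∃ x ∈ C, ∃ y ∈ C, z = x - y} :=
        ⟨_, hmem p hp, _, hmem q hq, rfl⟩
      have hb : ((fun j => ((V r j : ℤ) : ℚ)) - fun j => ((V s j : ℤ) : ℚ)) ∈
          {z : Fin 4 → ℚ | ∃ x ∈ C, ∃ y ∈ C, z = x - y} :=
        ⟨_, hmem r hr, _, hmem s hs, rfl⟩
      have hm := Submodule.smul_mem _ ((1:ℚ)/2)
        (add_mem (Submodule.subset_span ha) (Submodule.subset_span hb))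
      convert hm using 1
      funext j
      simp only [hz, Pi.smul_apply, Pi.add_apply, Pi.sub_apply, smul_eq_mul]
      push_cast
      ring
    have hzint : ∀ j, ∃ k : ℤ, z j = k := by
      intro j
      obtain ⟨m, hm⟩ := hdvd j
      exact ⟨m, by simp only [hz]; rw [hm]; push_cast; ring⟩
    have hz2 : (∑ j, z j * z j) = 2 := by
      have h8 : ((V p 0 + V r 0 - V q 0 - V s 0)^2 + (V p 1 + V r 1 - V q 1 - V s 1)^2
          + (V p 2 + V r 2 - V q 2 - V s 2)^2 + (V p 3 + V r 3 - V q 3 - V s 3)^2 : ℤ) = 8 := by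
        simpa [Fin.sum_univ_four] using hsum8
      have h8' : (((V p 0 + V r 0 - V q 0 - V s 0 : ℤ) : ℚ))^2
          + (((V p 1 + V r 1 - V q 1 - V s 1 : ℤ) : ℚ))^2
          + (((V p 2 + V r 2 - V q 2 - V s 2 : ℤ) : ℚ))^2
          + (((V p 3 + V r 3 - V q 3 - V s 3 : ℤ) : ℚ))^2 = 8 := by exact_mod_cast h8
      simp only [Fin.sum_univ_four, hz]
      nlinarith [h8']
    exact hspan z hzspan hzint hz2
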